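/- With ℓ := 1/(2(k - a)) > 0 and ε := k - k* where k* = a + √(a² + q/r), the scalar LQR cost gap satisfies J(k) - J(k*) = r ℓ ε² for all k > a. -/
import Mathlib


theorem stmt9 (a q r : ℝ) (hq : 0 < q) (hr : 0 < r)
    (J : ℝ → ℝ) (hJ : ∀ k, J k = (q + r * k ^ 2) / (2 * (k - a)))
    (kstar : ℝ) (hks : kstar = a + Real.sqrt (a ^ 2 + q / r)) :
    ∀ k > a, J k - J kstar = r * (1 / (2 * (k - a))) * (k - kstar) ^ 2 := by
  intro k hk
  set s := Real.sqrt (a ^ 2 + q / r) with hsdef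
  have hnn : (0:ℝ) ≤ a ^ 2 + q / r := by positivity
  have hs2 : s ^ 2 = a ^ 2 + q / r := Real.sq_sqrt hnn
  have hspos : 0 < s := Real.sqrt_pos.mpr (by positivity)
  have hq' : q = r * (s ^ 2 - a ^ 2) := by
    field_simp at hs2; nlinarith [hs2]
  rw [hJ, hJ, hks]
  have hka : k - a ≠ 0 := by linarith
  have h2 : a + s - a = s := by ring
  rw [h2, hq']
  field_simp
  ring
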